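/- Suppose V : ℕ × ℕ → ℝ is coordinatewise nondecreasing and submodular. Then there exists a nondecreasing function τ : ℕ → {−∞} ∪ ℕ ∪ {+∞} (with the obvious order) such that for every (a,b) ∈ ℕ × ℕ with a ≥ b, one has Q_sense V (a,b) ≤ Q_comm V (a,b) if and only if a ≤ τ(b). Equivalently, the greedy policy with respect to V has a monotone threshold structure: it senses when a ≤ τ(b) and communicates otherwise, and the switching curve τ is nondecreasing. -/

import Mathlib

noncomputable def Qsense (γ lams cs : ℝ) (V : ℕ × ℕ → ℝ) (p : ℕ × ℕ) : ℝ :=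
  (p.1 : ℝ) + cs + γ * (lams * V (p.1 + 1, 1) + (1 - lams) * V (p.1 + 1, p.2 + 1))

noncomputable def Qcomm (γ lamc cc : ℝ) (V : ℕ × ℕ → ℝ) (p : ℕ × ℕ) : ℝ :=
  (p.1 : ℝ) + cc + γ * (lamc * V (p.2 + 1, p.2 + 1) + (1 - lamc) * V (p.1 + 1, p.2 + 1))

noncomputable def Delta (γ lams lamc cs cc : ℝ) (V : ℕ × ℕ → ℝ) (p : ℕ × ℕ) : ℝ :=
  Qsense γ lams cs V p - Qcomm γ lamc cc V p

noncomputable def Tbell (γ lams lamc cs cc : ℝ) (V : ℕ × ℕ → ℝ) : ℕ × ℕ → ℝ :=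
  fun p => min (Qsense γ lams cs V p) (Qcomm γ lamc cc V p)

/-- `V` is nondecreasing in each argument separately. -/
def CoordNondecr (V : ℕ × ℕ → ℝ) : Prop :=
  (∀ a a' b : ℕ, a ≤ a' → V (a, b) ≤ V (a', b)) ∧
  (∀ a b b' : ℕ, b ≤ b' → V (a, b) ≤ V (a, b'))

/-- Submodularity on the lattice `ℕ × ℕ` (componentwise max/min). -/
def Submodular (W : ℕ × ℕ → ℝ) : Prop :=
  ∀ x y : ℕ × ℕ, W (x ⊔ y) + W (x ⊓ y) ≤ W x + W y

lemma delta_mono_a (γ lams lamc cs cc : ℝ)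
    (hγ0 : 0 < γ) (hs0 : 0 ≤ lams) (hsc : lams ≤ lamc)
    (V : ℕ × ℕ → ℝ) (hmono : CoordNondecr V)
    (a a' b : ℕ) (h : a ≤ a') :
    Delta γ lams lamc cs cc V (a, b) ≤ Delta γ lams lamc cs cc V (a', b) := by
  have h1 := hmono.1 (a+1) (a'+1) 1 (by omega)
  have h2 := hmono.1 (a+1) (a'+1) (b+1) (by omega)
  unfold Delta Qsense Qcomm
  simp only
  nlinarith [mul_nonneg hγ0.le (mul_nonneg hs0 (sub_nonneg.mpr h1)),
    mul_nonneg hγ0.le (mul_nonneg (sub_nonneg.mpr hsc) (sub_nonneg.mpr h2))]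

lemma delta_step_b (γ lams lamc cs cc : ℝ)
    (hγ0 : 0 < γ) (hs0 : 0 ≤ lams) (hsc : lams ≤ lamc)
    (V : ℕ × ℕ → ℝ) (hmono : CoordNondecr V) (hsub : Submodular V)
    (a b : ℕ) (h : b + 1 ≤ a) :
    Delta γ lams lamc cs cc V (a, b + 1) ≤ Delta γ lams lamc cs cc V (a, b) := by
  have hs := hsub (a+1, b+1) (b+2, b+2)
  have hsupeq : ((a+1, b+1) : ℕ × ℕ) ⊔ (b+2, b+2) = (a+1, b+2) := by
    simp [Prod.ext_iff]; omega
  have hinfeq : ((a+1, b+1) : ℕ × ℕ) ⊓ (b+2, b+2) = (b+2, b+1) := by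
    simp [Prod.ext_iff]; omega
  rw [hsupeq, hinfeq] at hs
  have k2 : V (b+1, b+1) ≤ V (b+2, b+1) := hmono.1 _ _ _ (by omega)
  have k3 : V (b+2, b+1) ≤ V (b+2, b+2) := hmono.2 _ _ _ (by omega)
  have key : (lamc - lams) * (V (a+1, b+2) - V (a+1, b+1))
      ≤ lamc * (V (b+2, b+2) - V (b+1, b+1)) := by
    nlinarith [mul_le_mul_of_nonneg_left (by linarith : V (a+1, b+2) - V (a+1, b+1) ≤ V (b+2, b+2) - V (b+1, b+1)) (by linarith : (0:ℝ) ≤ lamc - lams),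
      mul_nonneg hs0 (by linarith : (0:ℝ) ≤ V (b+2, b+2) - V (b+1, b+1))]
  have := mul_le_mul_of_nonneg_left key hγ0.le
  unfold Delta Qsense Qcomm
  simp only
  push_cast
  nlinarith [this]

lemma delta_anti_b (γ lams lamc cs cc : ℝ)
    (hγ0 : 0 < γ) (hs0 : 0 ≤ lams) (hsc : lams ≤ lamc)
    (V : ℕ × ℕ → ℝ) (hmono : CoordNondecr V) (hsub : Submodular V)
    (a b b' : ℕ) (hbb : b ≤ b') (hba : b' ≤ a) :
    Delta γ lams lamc cs cc V (a, b') ≤ Delta γ lams lamc cs cc V (a, b) := by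
  induction b' with
  | zero => obtain rfl := Nat.le_zero.mp hbb; exact le_refl _
  | succ c ih =>
    rcases Nat.eq_or_lt_of_le hbb with rfl | hlt
    · rfl
    · have h1 : b ≤ c := by omega
      calc Delta γ lams lamc cs cc V (a, c+1)
          ≤ Delta γ lams lamc cs cc V (a, c) :=
            delta_step_b γ lams lamc cs cc hγ0 hs0 hsc V hmono hsub a c (by omega)
        _ ≤ _ := ih h1 (by omega)
  

/-- For coordinatewise nondecreasing submodular `V`, the greedy policy has a monotone
threshold structure on the reachable region `a ≥ b`. -/
theorem greedy_policy_monotone_threshold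
    (γ lams lamc cs cc : ℝ)
    (hγ0 : 0 < γ) (hγ1 : γ < 1) (hs0 : 0 ≤ lams) (hsc : lams ≤ lamc) (hc1 : lamc ≤ 1)
    (hcs : 0 ≤ cs) (hcc : 0 ≤ cc)
    (V : ℕ × ℕ → ℝ) (hmono : CoordNondecr V) (hsub : Submodular V) :
    ∃ τ : ℕ → WithBot ℕ∞, Monotone τ ∧
      ∀ a b : ℕ, b ≤ a →
        (Qsense γ lams cs V (a, b) ≤ Qcomm γ lamc cc V (a, b) ↔
          ((a : ℕ∞) : WithBot ℕ∞) ≤ τ b) := by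
  classical
  set D : ℕ × ℕ → ℝ := Delta γ lams lamc cs cc V with hD
  set S : ℕ → Set ℕ := fun b => {a | a < b ∨ D (a, b) ≤ 0} with hS
  refine ⟨fun b => sSup ((fun n : ℕ => ((n : ℕ∞) : WithBot ℕ∞)) '' S b), ?_, ?_⟩
  · intro b b' hbb'
    apply sSup_le_sSup
    apply Set.image_mono
    intro x hx
    rcases hx with hx | hx
    · exact Or.inl (by omega)
    · rcases lt_or_ge x b' with h | h
      · exact Or.inl h
      · exact Or.inr (le_trans
          (delta_anti_b γ lams lamc cs cc hγ0 hs0 hsc V hmono hsub x b b' hbb' h) hx)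
  · intro a b hba
    rw [← sub_nonpos]
    show D (a, b) ≤ 0 ↔ _
    constructor
    · intro h
      exact le_sSup ⟨a, Or.inr h, rfl⟩
    · intro hle
      by_contra hnot
      push_neg at hnot
      have hxlt : ∀ x ∈ S b, x < a := by
        intro x hx
        by_contra hxa
        push_neg at hxa
        rcases hx with hx | hx
        · omega
        · exact absurd (le_trans
            (delta_mono_a γ lams lamc cs cc hγ0 hs0 hsc V hmono a x b hxa) hx)
            (not_le_of_gt hnot)
      rcases Nat.eq_zero_or_pos a with rfl | hpos
      · have hempty : (fun n : ℕ => ((n : ℕ∞) : WithBot ℕ∞)) '' S b = ∅ := by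
          rw [Set.image_eq_empty, Set.eq_empty_iff_forall_notMem]
          intro x hx
          exact absurd (hxlt x hx) (by omega)
        simp only at hle
        rw [hempty, sSup_empty] at hle
        simp at hle
      · have hbd : sSup ((fun n : ℕ => ((n : ℕ∞) : WithBot ℕ∞)) '' S b)
            ≤ (((a - 1 : ℕ) : ℕ∞) : WithBot ℕ∞) := by
          apply sSup_le
          rintro z ⟨x, hx, rfl⟩
          have hx1 : x ≤ a - 1 := by have := hxlt x hx; omega
          show ((x : ℕ∞) : WithBot ℕ∞) ≤ _
          exact_mod_cast hx1
        have : ((a : ℕ∞) : WithBot ℕ∞) ≤ (((a - 1 : ℕ) : ℕ∞) : WithBot ℕ∞) :=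
          le_trans hle hbd
        have : a ≤ a - 1 := by exact_mod_cast this
        omega
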